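/- arXiv:2406.12391 — 2 statements merged into one kernel-verified Lean document; each statement's English description precedes it below -/
import Mathlib

section
/- Let H : ℝ^{n₁} × ℝ^{n₂} → ℝ be continuously differentiable, J ∈ ℝ^{n×n} skew-symmetric, R ∈ ℝ^{n×n} symmetric positive semi-definite with n = n₁+n₂+n₃, and let z₁, z₂, z₃ be differentiable curves satisfying the system [∂_{z₁}H(z₁,z₂); ż₂; 0] = (J − R)[ż₁; ∂_{z₂}H(z₁,z₂); z₃] (zero input). Then the function t ↦ H(z₁(t), z₂(t)) is nonincreasing, i.e., d/dt H(z₁(t), z₂(t)) ≤ 0 for all t. -/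
open Matrix

lemma dot_append_aux {m n : ℕ} (a c : Fin m → ℝ) (b d : Fin n → ℝ) :
    Fin.append a b ⬝ᵥ Fin.append c d = a ⬝ᵥ c + b ⬝ᵥ d := by
  simp [dotProduct, Fin.sum_univ_add]

lemma dot_bound_aux {m : ℕ} (g v : Fin m → ℝ) : |g ⬝ᵥ v| ≤ m * ‖g‖ * ‖v‖ := by
  calc |g ⬝ᵥ v| ≤ ∑ i, |g i * v i| := Finset.abs_sum_le_sum_abs _ _
    _ ≤ ∑ _i : Fin m, ‖g‖ * ‖v‖ := by
        refine Finset.sum_le_sum fun i _ => ?_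
        rw [abs_mul]
        exact mul_le_mul (norm_le_pi_norm g i) (norm_le_pi_norm v i) (abs_nonneg _) (norm_nonneg _)
    _ = m * ‖g‖ * ‖v‖ := by simp [mul_assoc]

noncomputable def Lmap {n₁ n₂ : ℕ} (g : Fin n₁ → ℝ) (h : Fin n₂ → ℝ) :
    ((Fin n₁ → ℝ) × (Fin n₂ → ℝ)) →L[ℝ] ℝ :=
  LinearMap.toContinuousLinearMap
    { toFun := fun q => g ⬝ᵥ q.1 + h ⬝ᵥ q.2
      map_add' := by intro x y; simp [dotProduct_add]; ring
      map_smul' := by intro c x; simp [dotProduct_smul]; ring }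

@[simp] lemma Lmap_apply {n₁ n₂ : ℕ} (g : Fin n₁ → ℝ) (h : Fin n₂ → ℝ)
    (q : (Fin n₁ → ℝ) × (Fin n₂ → ℝ)) : Lmap g h q = g ⬝ᵥ q.1 + h ⬝ᵥ q.2 := rfl

lemma aux_fderiv {n₁ n₂ : ℕ}
    (H : (Fin n₁ → ℝ) → (Fin n₂ → ℝ) → ℝ)
    (G₁ : (Fin n₁ → ℝ) → (Fin n₂ → ℝ) → (Fin n₁ → ℝ))
    (G₂ : (Fin n₁ → ℝ) → (Fin n₂ → ℝ) → (Fin n₂ → ℝ))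
    (hdiff : ∀ (a : Fin n₁ → ℝ) (b : Fin n₂ → ℝ) (v : Fin n₁ → ℝ) (w : Fin n₂ → ℝ),
      HasDerivAt (fun s : ℝ => H (a + s • v) (b + s • w)) (G₁ a b ⬝ᵥ v + G₂ a b ⬝ᵥ w) 0)
    (hcont : Continuous fun p : (Fin n₁ → ℝ) × (Fin n₂ → ℝ) => (G₁ p.1 p.2, G₂ p.1 p.2))
    (p : (Fin n₁ → ℝ) × (Fin n₂ → ℝ)) :
    HasFDerivAt (fun q : (Fin n₁ → ℝ) × (Fin n₂ → ℝ) => H q.1 q.2)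
      (Lmap (G₁ p.1 p.2) (G₂ p.1 p.2)) p := by
  -- directional derivative at any point along any line, at any parameter
  have hline : ∀ (a : Fin n₁ → ℝ) (b : Fin n₂ → ℝ) (v : Fin n₁ → ℝ) (w : Fin n₂ → ℝ) (s : ℝ),
      HasDerivAt (fun σ : ℝ => H (a + σ • v) (b + σ • w))
        (G₁ (a + s • v) (b + s • w) ⬝ᵥ v + G₂ (a + s • v) (b + s • w) ⬝ᵥ w) s := by
    intro a b v w s
    have hd := hdiff (a + s • v) (b + s • w) v w
    have hd0 : HasDerivAt (fun u : ℝ => H (a + s • v + u • v) (b + s • w + u • w))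
        (G₁ (a + s • v) (b + s • w) ⬝ᵥ v + G₂ (a + s • v) (b + s • w) ⬝ᵥ w) (s - s) := by
      simpa using hd
    have hdc := hd0.comp_sub_const s s
    have heq : (fun σ : ℝ => H (a + s • v + (σ - s) • v) (b + s • w + (σ - s) • w))
        = fun σ : ℝ => H (a + σ • v) (b + σ • w) := by
      funext σ
      congr 1 <;> · rw [sub_smul]; abel
    rw [heq] at hdc
    exact hdc
  rw [hasFDerivAt_iff_isLittleO_nhds_zero, Asymptotics.isLittleO_iff]
  intro ε hε
  have hε' : (0:ℝ) < ε / (n₁ + n₂ + 1) := by positivity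
  obtain ⟨δ, hδ, hδ'⟩ := Metric.continuousAt_iff.1 (hcont.continuousAt (x := p)) _ hε'
  rw [Metric.eventually_nhds_iff]
  refine ⟨δ, hδ, fun h hh => ?_⟩
  rw [dist_zero_right] at hh
  -- MVT along the segment from p to p + h
  obtain ⟨c, hc, hceq⟩ := exists_hasDerivAt_eq_slope
    (fun s : ℝ => H (p.1 + s • h.1) (p.2 + s • h.2))
    (fun s : ℝ => G₁ (p.1 + s • h.1) (p.2 + s • h.2) ⬝ᵥ h.1
        + G₂ (p.1 + s • h.1) (p.2 + s • h.2) ⬝ᵥ h.2)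
    zero_lt_one
    (fun s _ => (hline p.1 p.2 h.1 h.2 s).continuousAt.continuousWithinAt)
    (fun s _ => hline p.1 p.2 h.1 h.2 s)
  simp only [one_smul, zero_smul, add_zero, sub_zero, div_one] at hceq
  -- the intermediate point is δ-close to p
  have hnear : dist (p.1 + c • h.1, p.2 + c • h.2) p < δ := by
    rw [Prod.dist_eq]
    have hc1 : |c| ≤ 1 := by
      rw [abs_of_pos hc.1]; exact hc.2.le
    have b1 : dist (p.1 + c • h.1) p.1 < δ := by
      rw [dist_eq_norm, add_sub_cancel_left, norm_smul]
      calc ‖c‖ * ‖h.1‖ ≤ 1 * ‖h‖ :=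
            mul_le_mul hc1 ((norm_fst_le h)) (norm_nonneg _) zero_le_one
        _ < δ := by simpa using hh
    have b2 : dist (p.2 + c • h.2) p.2 < δ := by
      rw [dist_eq_norm, add_sub_cancel_left, norm_smul]
      calc ‖c‖ * ‖h.2‖ ≤ 1 * ‖h‖ :=
            mul_le_mul hc1 ((norm_snd_le h)) (norm_nonneg _) zero_le_one
        _ < δ := by simpa using hh
    exact max_lt b1 b2
  have hGnear := hδ' hnear
  rw [Prod.dist_eq] at hGnear
  have hG1 : ‖G₁ (p.1 + c • h.1) (p.2 + c • h.2) - G₁ p.1 p.2‖ < ε / (n₁ + n₂ + 1) := by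
    have := (max_lt_iff.1 hGnear).1
    rwa [dist_eq_norm] at this
  have hG2 : ‖G₂ (p.1 + c • h.1) (p.2 + c • h.2) - G₂ p.1 p.2‖ < ε / (n₁ + n₂ + 1) := by
    have := (max_lt_iff.1 hGnear).2
    rwa [dist_eq_norm] at this
  -- put everything together
  have hrw : H (p + h).1 (p + h).2 - H p.1 p.2 - Lmap (G₁ p.1 p.2) (G₂ p.1 p.2) h
      = (G₁ (p.1 + c • h.1) (p.2 + c • h.2) - G₁ p.1 p.2) ⬝ᵥ h.1
        + (G₂ (p.1 + c • h.1) (p.2 + c • h.2) - G₂ p.1 p.2) ⬝ᵥ h.2 := by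
    have : H (p + h).1 (p + h).2 - H p.1 p.2
        = G₁ (p.1 + c • h.1) (p.2 + c • h.2) ⬝ᵥ h.1
          + G₂ (p.1 + c • h.1) (p.2 + c • h.2) ⬝ᵥ h.2 := hceq.symm
    rw [this, Lmap_apply, sub_dotProduct, sub_dotProduct]
    ring
  rw [Real.norm_eq_abs, hrw]
  have key : |(G₁ (p.1 + c • h.1) (p.2 + c • h.2) - G₁ p.1 p.2) ⬝ᵥ h.1
        + (G₂ (p.1 + c • h.1) (p.2 + c • h.2) - G₂ p.1 p.2) ⬝ᵥ h.2|
      ≤ n₁ * (ε / (n₁ + n₂ + 1)) * ‖h‖ + n₂ * (ε / (n₁ + n₂ + 1)) * ‖h‖ := by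
    refine (abs_add_le _ _).trans (add_le_add ?_ ?_)
    · refine (dot_bound_aux _ _).trans ?_
      gcongr (n₁ : ℝ) * ?_ * ?_
      exact norm_fst_le h
    · refine (dot_bound_aux _ _).trans ?_
      gcongr (n₂ : ℝ) * ?_ * ?_
      exact norm_snd_le h
  refine key.trans ?_
  have hn : (n₁ : ℝ) * (ε / (n₁ + n₂ + 1)) + n₂ * (ε / (n₁ + n₂ + 1)) ≤ ε := by
    have h1 : (0:ℝ) < (n₁ : ℝ) + n₂ + 1 := by positivity
    rw [← add_mul]
    calc ((n₁:ℝ) + n₂) * (ε / ((n₁:ℝ) + n₂ + 1))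
        ≤ ((n₁:ℝ) + n₂ + 1) * (ε / ((n₁:ℝ) + n₂ + 1)) :=
          mul_le_mul_of_nonneg_right (by linarith) hε'.le
      _ = ε := by field_simp
  nlinarith [norm_nonneg h]

theorem stmt_0 {n₁ n₂ n₃ : ℕ}
    (H : (Fin n₁ → ℝ) → (Fin n₂ → ℝ) → ℝ)
    (G₁ : (Fin n₁ → ℝ) → (Fin n₂ → ℝ) → (Fin n₁ → ℝ))
    (G₂ : (Fin n₁ → ℝ) → (Fin n₂ → ℝ) → (Fin n₂ → ℝ))
    -- H is differentiable with partial gradients G₁, G₂ ...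
    (hdiff : ∀ (a : Fin n₁ → ℝ) (b : Fin n₂ → ℝ) (v : Fin n₁ → ℝ) (w : Fin n₂ → ℝ),
      HasDerivAt (fun s : ℝ => H (a + s • v) (b + s • w)) (G₁ a b ⬝ᵥ v + G₂ a b ⬝ᵥ w) 0)
    -- ... which are continuous (H is C¹)
    (hcont : Continuous fun p : (Fin n₁ → ℝ) × (Fin n₂ → ℝ) => (G₁ p.1 p.2, G₂ p.1 p.2))
    (J R : Matrix (Fin (n₁ + n₂ + n₃)) (Fin (n₁ + n₂ + n₃)) ℝ)
    (hJ : Jᵀ = -J) (hR : R.PosSemidef)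
    (z₁ : ℝ → Fin n₁ → ℝ) (z₂ : ℝ → Fin n₂ → ℝ) (z₃ : ℝ → Fin n₃ → ℝ)
    (z₁' : ℝ → Fin n₁ → ℝ) (z₂' : ℝ → Fin n₂ → ℝ)
    (hz₁ : ∀ t, HasDerivAt z₁ (z₁' t) t)
    (hz₂ : ∀ t, HasDerivAt z₂ (z₂' t) t)
    -- the system [∂_{z₁}H; ż₂; 0] = (J − R)[ż₁; ∂_{z₂}H; z₃]
    (hsys : ∀ t,
      Fin.append (Fin.append (G₁ (z₁ t) (z₂ t)) (z₂' t)) (0 : Fin n₃ → ℝ)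
        = (J - R).mulVec
            (Fin.append (Fin.append (z₁' t) (G₂ (z₁ t) (z₂ t))) (z₃ t))) :
    Antitone (fun t => H (z₁ t) (z₂ t)) ∧
      ∀ t, deriv (fun τ => H (z₁ τ) (z₂ τ)) t ≤ 0 := by
  -- derivative of the composed energy
  have hφ : ∀ t, HasDerivAt (fun τ => H (z₁ τ) (z₂ τ))
      (G₁ (z₁ t) (z₂ t) ⬝ᵥ z₁' t + G₂ (z₁ t) (z₂ t) ⬝ᵥ z₂' t) t := by
    intro t
    have hz : HasDerivAt (fun τ => (z₁ τ, z₂ τ)) (z₁' t, z₂' t) t := (hz₁ t).prodMk (hz₂ t)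
    have := (aux_fderiv H G₁ G₂ hdiff hcont (z₁ t, z₂ t)).comp_hasDerivAt t hz
    simpa [Function.comp_def] using this
  -- energy dissipation inequality
  have hkey : ∀ t, G₁ (z₁ t) (z₂ t) ⬝ᵥ z₁' t + G₂ (z₁ t) (z₂ t) ⬝ᵥ z₂' t ≤ 0 := by
    intro t
    set x : Fin (n₁ + n₂ + n₃) → ℝ :=
      Fin.append (Fin.append (z₁' t) (G₂ (z₁ t) (z₂ t))) (z₃ t) with hx
    have h1 : x ⬝ᵥ Fin.append (Fin.append (G₁ (z₁ t) (z₂ t)) (z₂' t)) (0 : Fin n₃ → ℝ)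
        = x ⬝ᵥ (J - R).mulVec x := by rw [hsys t]
    have hleft : x ⬝ᵥ Fin.append (Fin.append (G₁ (z₁ t) (z₂ t)) (z₂' t)) (0 : Fin n₃ → ℝ)
        = G₁ (z₁ t) (z₂ t) ⬝ᵥ z₁' t + G₂ (z₁ t) (z₂ t) ⬝ᵥ z₂' t := by
      rw [hx, dot_append_aux, dot_append_aux]
      rw [dotProduct_comm (z₁' t), dotProduct_zero, add_zero]
    have hJ0 : x ⬝ᵥ J.mulVec x = 0 := by
      have : x ⬝ᵥ J.mulVec x = -(x ⬝ᵥ J.mulVec x) := by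
        conv_lhs => rw [Matrix.dotProduct_mulVec, ← Matrix.mulVec_transpose, hJ,
          Matrix.neg_mulVec, neg_dotProduct, dotProduct_comm]
      linarith
    have hR0 : 0 ≤ x ⬝ᵥ R.mulVec x := by
      have := hR.dotProduct_mulVec_nonneg x
      simpa using this
    have hright : x ⬝ᵥ (J - R).mulVec x ≤ 0 := by
      rw [Matrix.sub_mulVec, dotProduct_sub, hJ0]
      linarith
    rw [← hleft, h1]
    exact hright
  refine ⟨?_, fun t => ?_⟩
  · refine antitone_of_deriv_nonpos (fun t => (hφ t).differentiableAt) fun t => ?_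
    rw [(hφ t).deriv]
    exact hkey t
  · rw [(hφ t).deriv]
    exact hkey t
end

section
/- Let H(z₁,z₂) = ½⟨z₁,M₁z₁⟩ + ½⟨z₂,M₂z₂⟩ with M₁, M₂ symmetric, J skew-symmetric, R symmetric positive semi-definite, τ > 0, and suppose (zⁿ, z^{n+1}) satisfy the midpoint scheme [τ∂_{z₁}H^{n+1/2}; z₂^{n+1}−z₂ⁿ; 0] = (J−R)[z₁^{n+1}−z₁ⁿ; τ∂_{z₂}H^{n+1/2}; τz₃^{n+1/2}] + τ[B₁;B₂;B₃]u^{n+1/2}, with output τy^{n+1/2} = [B₁ᵀ B₂ᵀ B₃ᵀ][z₁^{n+1}−z₁ⁿ; τ∂_{z₂}H^{n+1/2}; τz₃^{n+1/2}]. Then H(z^{n+1}) − H(zⁿ) ≤ τ⟨y^{n+1/2}, u^{n+1/2}⟩; in particular H(z^{n+1}) ≤ H(zⁿ) when u^{n+1/2} = 0. -/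
open Matrix

lemma dot_append {p q : ℕ} (a c : Fin p → ℝ) (b d : Fin q → ℝ) :
    Fin.append a b ⬝ᵥ Fin.append c d = a ⬝ᵥ c + b ⬝ᵥ d := by
  simp [dotProduct, Fin.sum_univ_add]

lemma symm_dot_mid {p : ℕ} (M : Matrix (Fin p) (Fin p) ℝ) (hM : M.IsSymm)
    (a b : Fin p → ℝ) :
    (M.mulVec ((1 / 2 : ℝ) • (a + b))) ⬝ᵥ (b - a)
      = (1 / 2) * (b ⬝ᵥ M.mulVec b) - (1 / 2) * (a ⬝ᵥ M.mulVec a) := by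
  have hsym : ∀ x y : Fin p → ℝ, x ⬝ᵥ M.mulVec y = y ⬝ᵥ M.mulVec x := fun x y => by
    rw [Matrix.dotProduct_mulVec, ← Matrix.mulVec_transpose, hM.eq, dotProduct_comm]
  rw [Matrix.mulVec_smul, Matrix.mulVec_add]
  rw [smul_dotProduct, dotProduct_sub, add_dotProduct,
    add_dotProduct, dotProduct_comm (M.mulVec a) b,
    dotProduct_comm (M.mulVec a) a, dotProduct_comm (M.mulVec b) b,
    dotProduct_comm (M.mulVec b) a, hsym a b]
  simp only [smul_eq_mul]
  ring

theorem stmt_8 {n₁ n₂ n₃ m : ℕ}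
    (M₁ : Matrix (Fin n₁) (Fin n₁) ℝ) (M₂ : Matrix (Fin n₂) (Fin n₂) ℝ)
    (hM₁ : M₁.IsSymm) (hM₂ : M₂.IsSymm)
    (H : (Fin n₁ → ℝ) → (Fin n₂ → ℝ) → ℝ)
    (hH : ∀ a b, H a b = (1 / 2) * (a ⬝ᵥ M₁.mulVec a) + (1 / 2) * (b ⬝ᵥ M₂.mulVec b))
    (J R : Matrix (Fin (n₁ + n₂ + n₃)) (Fin (n₁ + n₂ + n₃)) ℝ)
    (hJ : Jᵀ = -J) (hR : R.PosSemidef)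
    (B₁ : Matrix (Fin n₁) (Fin m) ℝ) (B₂ : Matrix (Fin n₂) (Fin m) ℝ)
    (B₃ : Matrix (Fin n₃) (Fin m) ℝ)
    (B : Matrix (Fin (n₁ + n₂ + n₃)) (Fin m) ℝ)
    (hB : B = Matrix.of (Fin.append (Fin.append B₁ B₂) B₃))
    (τ : ℝ) (hτ : 0 < τ)
    -- zⁿ = (z₁, z₂, z₃) and z^{n+1} = (w₁, w₂, w₃)
    (z₁ w₁ : Fin n₁ → ℝ) (z₂ w₂ : Fin n₂ → ℝ) (z₃ w₃ : Fin n₃ → ℝ)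
    (u y : Fin m → ℝ)
    -- f = [z₁^{n+1} − z₁ⁿ; τ ∂_{z₂}H^{n+1/2}; τ z₃^{n+1/2}]
    (f : Fin (n₁ + n₂ + n₃) → ℝ)
    (hf : f = Fin.append (Fin.append (w₁ - z₁)
        (τ • M₂.mulVec ((1 / 2 : ℝ) • (z₂ + w₂)))) (τ • ((1 / 2 : ℝ) • (z₃ + w₃))))
    -- midpoint scheme
    (hsys : Fin.append (Fin.append (τ • M₁.mulVec ((1 / 2 : ℝ) • (z₁ + w₁)))
        (w₂ - z₂)) (0 : Fin n₃ → ℝ)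
      = (J - R).mulVec f + τ • B.mulVec u)
    -- output equation
    (hout : τ • y = Bᵀ.mulVec f) :
    H w₁ w₂ - H z₁ z₂ ≤ τ * (y ⬝ᵥ u) ∧ (u = 0 → H w₁ w₂ ≤ H z₁ z₂) := by
  set g : Fin (n₁ + n₂ + n₃) → ℝ :=
    Fin.append (Fin.append (τ • M₁.mulVec ((1 / 2 : ℝ) • (z₁ + w₁)))
      (w₂ - z₂)) (0 : Fin n₃ → ℝ) with hg
  -- g ⬝ᵥ f = τ * (H w - H z)
  have h1 : g ⬝ᵥ f = τ * (H w₁ w₂ - H z₁ z₂) := by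
    rw [hg, hf, dot_append, dot_append, zero_dotProduct,
      smul_dotProduct, dotProduct_smul,
      symm_dot_mid M₁ hM₁ z₁ w₁,
      dotProduct_comm (w₂ - z₂), symm_dot_mid M₂ hM₂ z₂ w₂, hH, hH]
    simp only [smul_eq_mul]
    ring
  -- J skew gives zero
  have hJ0 : J.mulVec f ⬝ᵥ f = 0 := by
    have h := Matrix.dotProduct_mulVec f J f
    rw [← Matrix.mulVec_transpose, hJ, Matrix.neg_mulVec, neg_dotProduct,
      dotProduct_comm] at h
    linarith
  -- other evaluation of g ⬝ᵥ f
  have h2 : g ⬝ᵥ f = -(f ⬝ᵥ R.mulVec f) + τ^2 * (y ⬝ᵥ u) := by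
    rw [hsys, add_dotProduct, Matrix.sub_mulVec, sub_dotProduct, hJ0,
      smul_dotProduct]
    have hBu : B.mulVec u ⬝ᵥ f = u ⬝ᵥ Bᵀ.mulVec f := by
      rw [Matrix.dotProduct_mulVec u, Matrix.vecMul_transpose]
    rw [hBu, ← hout, dotProduct_smul, dotProduct_comm (R.mulVec f) f,
      dotProduct_comm u y]
    simp only [smul_eq_mul]
    ring
  have hRf : 0 ≤ f ⬝ᵥ R.mulVec f := by
    have := hR.dotProduct_mulVec_nonneg f
    simpa using this
  have key : τ * (H w₁ w₂ - H z₁ z₂) ≤ τ * (τ * (y ⬝ᵥ u)) := by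
    rw [← h1]
    rw [h2]; nlinarith
  have main : H w₁ w₂ - H z₁ z₂ ≤ τ * (y ⬝ᵥ u) := le_of_mul_le_mul_left key hτ
  refine ⟨main, fun hu => ?_⟩
  rw [hu] at main
  simpa using main
end
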